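/- arXiv:1910.04399 — 2 statements merged into one kernel-verified Lean document; each statement's English description precedes it below -/
import Mathlib

section
/- For m ≥ 2, if T is a path forest with exactly two paths and total order at most m², then T is m-burnable, unless the two path orders of T are exactly m² - 2 and 2. -/
/-- A graph is `m`-burnable if its vertices can be covered by `m` balls of
radii `0, 1, ..., m-1`. -/
def IsBurnable {V : Type*} (G : SimpleGraph V) (m : ℕ) : Prop :=
  ∃ f : Fin m → V, ∀ v : V, ∃ i : Fin m, G.edist (f i) v ≤ (i.val : ℕ∞)

/-- The burning number of a graph: the least `k` such that the graph is `k`-burnable. -/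
noncomputable def burningNumber {V : Type*} (G : SimpleGraph V) : ℕ :=
  sInf {k : ℕ | IsBurnable G k}

/-- The path forest whose `i`-th path has `l i` vertices. -/
def pathForest {n : ℕ} (l : Fin n → ℕ) : SimpleGraph (Σ i : Fin n, Fin (l i)) where
  Adj x y := x.1 = y.1 ∧ Nat.dist x.2.val y.2.val = 1
  symm := by
    constructor
    rintro ⟨i, a⟩ ⟨j, b⟩ ⟨h1, h2⟩
    exact ⟨h1.symm, by rwa [Nat.dist_comm]⟩
  loopless := by
    constructor
    rintro ⟨i, a⟩ ⟨_, h⟩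
    simp [Nat.dist_self] at h

/-- The spider with head `none` and arms of lengths `l 0, ..., l (n-1)`
(arm lengths count vertices excluding the head). -/
def spider {n : ℕ} (l : Fin n → ℕ) : SimpleGraph (Option (Σ i : Fin n, Fin (l i))) where
  Adj x y :=
    match x, y with
    | none, none => False
    | none, some b => b.2.val = 0
    | some a, none => a.2.val = 0
    | some a, some b => a.1 = b.1 ∧ Nat.dist a.2.val b.2.val = 1
  symm := by
    constructor
    rintro (_ | ⟨i, a⟩) (_ | ⟨j, b⟩) h <;> simp_all [Nat.dist_comm]

  loopless := by
    constructor
    rintro (_ | ⟨i, a⟩) h <;> simp_all [Nat.dist_self]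
lemma pf_aux {n : ℕ} (l : Fin n → ℕ) (i : Fin n) :
    ∀ (k : ℕ) (a b : Fin (l i)), b.val = a.val + k →
      (pathForest l).edist ⟨i,a⟩ ⟨i,b⟩ ≤ (k : ℕ∞) := by
  intro k
  induction k with
  | zero =>
    intro a b h
    have : a = b := Fin.ext (by omega)
    subst this
    simp [SimpleGraph.edist_self]
  | succ k ih =>
    intro a b h
    have ha1 : a.val + 1 < l i := by have := b.isLt; omega
    set a' : Fin (l i) := ⟨a.val + 1, ha1⟩ with ha'
    have hadj : (pathForest l).Adj ⟨i,a⟩ ⟨i,a'⟩ := by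
      refine ⟨rfl, ?_⟩
      simp [ha', Nat.dist]
    have h1 : (pathForest l).edist ⟨i,a⟩ ⟨i,a'⟩ ≤ 1 := by
      rw [SimpleGraph.edist_eq_one_iff_adj.mpr hadj]
    have h2 := ih a' b (by simp [ha']; omega)
    calc (pathForest l).edist ⟨i,a⟩ ⟨i,b⟩
        ≤ (pathForest l).edist ⟨i,a⟩ ⟨i,a'⟩ + (pathForest l).edist ⟨i,a'⟩ ⟨i,b⟩ :=
          SimpleGraph.edist_triangle
      _ ≤ 1 + (k : ℕ∞) := add_le_add h1 h2
      _ = ((k+1 : ℕ) : ℕ∞) := by push_cast; ring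

lemma pf_edist_le {n : ℕ} (l : Fin n → ℕ) (i : Fin n) (a b : Fin (l i)) :
    (pathForest l).edist ⟨i,a⟩ ⟨i,b⟩ ≤ (Nat.dist a.val b.val : ℕ∞) := by
  rcases le_or_gt a.val b.val with h | h
  · have := pf_aux l i (b.val - a.val) a b (by omega)
    have hd : Nat.dist a.val b.val = b.val - a.val := by rw [Nat.dist]; omega
    rwa [hd]
  · have := pf_aux l i (a.val - b.val) b a (by omega)
    have hd : Nat.dist a.val b.val = a.val - b.val := by rw [Nat.dist]; omega
    rw [hd, SimpleGraph.edist_comm]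
    exact this


lemma sum_odds (m : ℕ) : ∑ i ∈ Finset.range m, (2*i+1) = m^2 := by
  induction m with
  | zero => simp
  | succ m ih => rw [Finset.sum_range_succ, ih]; ring

lemma subsetSum : ∀ (m t : ℕ), t ≤ m^2 → t ≠ 2 → t + 2 ≠ m^2 →
    ∃ S ⊆ Finset.range m, ∑ i ∈ S, (2*i+1) = t := by
  intro m
  induction m with
  | zero =>
    intro t h1 _ _
    exact ⟨∅, by simp, by simpa using (by simpa using h1 : t = 0).symm⟩
  | succ m ih =>
    intro t h1 h2 h3
    simp only [pow_two] at h1 h3 ih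
    generalize hg : m*m = q at ih
    generalize hp : (m+1)*(m+1) = p at h1 h3
    have hsq : p = q + 2*m + 1 := by rw [← hg, ← hp]; ring
    by_cases hA : t ≤ q ∧ t + 2 ≠ q
    · obtain ⟨S, hS, hsum⟩ := ih t hA.1 h2 hA.2
      exact ⟨S, hS.trans (Finset.range_subset_range.mpr (by omega)), hsum⟩
    · push_neg at hA
      have hA' : t ≤ q → t + 2 = q := fun h => by
        by_contra hc
        exact hc (hA h)
      have f2 : 2 ≤ m → 2*m ≤ q := fun h => by rw [← hg]; nlinarith
      have f3 : 3 ≤ m → 2*m+3 ≤ q := fun h => by rw [← hg]; nlinarith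
      have f5 : 2*m+5 ≠ q := by
        rw [← hg]
        rcases le_or_gt m 4 with h | h
        · interval_cases m <;> omega
        · nlinarith
      have ht : 2*m + 1 ≤ t := by
        rcases le_or_gt t q with h | h
        · have h4 := hA' h
          rcases le_or_gt 3 m with hm | hm
          · have := f3 hm; omega
          · interval_cases m <;> omega
        · rcases le_or_gt 2 m with hm | hm
          · have := f2 hm; omega
          · interval_cases m <;> omega
      set r := t - (2*m+1) with hr
      have hr1 : r ≤ q := by omega
      have hr2 : r ≠ 2 := by
        intro hcon
        have htv : t = 2*m + 3 := by omega
        rcases le_or_gt t q with h | h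
        · have := hA' h; omega
        · rcases le_or_gt 3 m with hm | hm
          · have := f3 hm; omega
          · interval_cases m <;> omega
      have hr3 : r + 2 ≠ q := by omega
      obtain ⟨S, hS, hsum⟩ := ih r hr1 hr2 hr3
      refine ⟨insert m S, ?_, ?_⟩
      · intro x hx
        rcases Finset.mem_insert.mp hx with h | h
        · exact Finset.mem_range.mpr (by omega)
        · exact Finset.range_subset_range.mpr (by omega) (hS h)
      · rw [Finset.sum_insert (fun hc => by have := Finset.mem_range.mp (hS hc); omega)]
        omega


lemma cover (L : ℕ) (hL : 1 ≤ L) (S : Finset ℕ)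
    (hsum : L ≤ ∑ i ∈ S, (2*i+1)) (x : ℕ) (hx : x < L) :
    ∃ i ∈ S, Nat.dist (min ((∑ j ∈ S.filter (fun j => j < i), (2*j+1)) + i) (L-1)) x
      ≤ i := by
  have hSne : S.Nonempty := by
    rcases S.eq_empty_or_nonempty with h | h
    · subst h; simp at hsum; omega
    · exact h
  have hT : (S.filter (fun i => (∑ j ∈ S.filter (fun j => j < i), (2*j+1)) ≤ x)).Nonempty := by
    refine ⟨S.min' hSne, Finset.mem_filter.mpr ⟨S.min'_mem hSne, ?_⟩⟩
    have he : S.filter (fun j => j < S.min' hSne) = ∅ :=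
      Finset.filter_false_of_mem (fun j hj => not_lt.mpr (S.min'_le j hj))
    rw [he]
    simp
  set T := S.filter (fun i => (∑ j ∈ S.filter (fun j => j < i), (2*j+1)) ≤ x) with hTdef
  set i := T.max' hT with hi
  have hiT : i ∈ T := T.max'_mem hT
  have hiS : i ∈ S := (Finset.mem_filter.mp hiT).1
  have hix : (∑ j ∈ S.filter (fun j => j < i), (2*j+1)) ≤ x := (Finset.mem_filter.mp hiT).2
  have hnotmem : i ∉ S.filter (fun j => j < i) := fun h => lt_irrefl i (Finset.mem_filter.mp h).2
  have hup : x < (∑ j ∈ S.filter (fun j => j < i), (2*j+1)) + (2*i+1) := by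
    by_contra hge
    push_neg at hge
    rcases (S.filter (fun j => i < j)).eq_empty_or_nonempty with hU | hU
    · have hsub : S ⊆ insert i (S.filter (fun j => j < i)) := by
        intro k hk
        rcases lt_trichotomy k i with h | h | h
        · exact Finset.mem_insert.mpr (Or.inr (Finset.mem_filter.mpr ⟨hk, h⟩))
        · exact Finset.mem_insert.mpr (Or.inl h)
        · exfalso
          have : k ∈ S.filter (fun j => i < j) := Finset.mem_filter.mpr ⟨hk, h⟩
          rw [hU] at this
          exact absurd this (Finset.notMem_empty k)
      have h1 : (∑ j ∈ S, (2*j+1))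
          ≤ ∑ j ∈ insert i (S.filter (fun j => j < i)), (2*j+1) :=
        Finset.sum_le_sum_of_subset hsub
      rw [Finset.sum_insert hnotmem] at h1
      omega
    · set j := (S.filter (fun j => i < j)).min' hU with hj
      have hjmem := (S.filter (fun j => i < j)).min'_mem hU
      have hjS : j ∈ S := (Finset.mem_filter.mp hjmem).1
      have hij : i < j := (Finset.mem_filter.mp hjmem).2
      have hfe : S.filter (fun k => k < j) = insert i (S.filter (fun k => k < i)) := by
        ext k
        simp only [Finset.mem_filter, Finset.mem_insert]
        constructor
        · rintro ⟨hkS, hkj⟩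
          rcases lt_trichotomy k i with h | h | h
          · exact Or.inr ⟨hkS, h⟩
          · exact Or.inl h
          · exfalso
            have hkU : k ∈ S.filter (fun j => i < j) := Finset.mem_filter.mpr ⟨hkS, h⟩
            have := (S.filter (fun j => i < j)).min'_le k hkU
            rw [← hj] at this
            exact absurd hkj (not_lt.mpr this)
        · rintro (h | ⟨hkS, hki⟩)
          · exact ⟨h ▸ hiS, h ▸ hij⟩
          · exact ⟨hkS, hki.trans hij⟩
      have hstartj : (∑ k ∈ S.filter (fun k => k < j), (2*k+1))
          = (2*i+1) + ∑ k ∈ S.filter (fun k => k < i), (2*k+1) := by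
        rw [hfe, Finset.sum_insert hnotmem]
      have hjT : j ∈ T := by
        refine Finset.mem_filter.mpr ⟨hjS, ?_⟩
        rw [hstartj]
        omega
      have := T.le_max' j hjT
      rw [← hi] at this
      exact absurd hij (not_lt.mpr this)
  refine ⟨i, hiS, ?_⟩
  rw [Nat.dist]
  omega


/-- A path forest with two paths and total order at most `m²` is `m`-burnable,
unless its path orders are exactly `m² - 2` and `2`. -/
theorem stmt9 (m : ℕ) (hm : 2 ≤ m) (l : Fin 2 → ℕ)
    (hl : ∀ i, 1 ≤ l i)
    (horder : l 0 + l 1 ≤ m ^ 2)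
    (hexc : ¬ ((l 0 = m ^ 2 - 2 ∧ l 1 = 2) ∨ (l 0 = 2 ∧ l 1 = m ^ 2 - 2))) :
    IsBurnable (pathForest l) m := by
  classical
  have hl0 := hl 0
  have hl1 := hl 1
  have hsq4 : 4 ≤ m ^ 2 := by nlinarith
  have hne5 : m ^ 2 ≠ 5 := by
    rcases le_or_gt m 2 with h | h
    · interval_cases m <;> norm_num
    · nlinarith
  have hT : ∃ t, l 0 ≤ t ∧ t + l 1 ≤ m ^ 2 ∧ t ≠ 2 ∧ t + 2 ≠ m ^ 2 := by
    generalize hq : m ^ 2 = q at hsq4 hne5 horder hexc ⊢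
    refine ⟨if l 0 = 2 then 3 else if l 0 + 2 = q then q - 1 else l 0, ?_⟩
    split_ifs <;> omega
  obtain ⟨t, ht0, ht1, ht2, ht3⟩ := hT
  obtain ⟨S, hSsub, hSsum⟩ := subsetSum m t (le_trans (Nat.le_add_right t (l 1)) ht1) ht2 ht3
  have hsd := Finset.sum_sdiff (f := fun j => 2*j+1) hSsub
  rw [sum_odds, hSsum] at hsd
  have hcov0 : l 0 ≤ ∑ i ∈ S, (2*i+1) := by rw [hSsum]; exact ht0
  have hcov1 : l 1 ≤ ∑ i ∈ Finset.range m \ S, (2*i+1) := by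
    have hsd2 : (∑ j ∈ Finset.range m \ S, (2*j+1)) + t = m ^ 2 := hsd
    rw [← hsd2] at ht1
    omega
  refine ⟨fun i => if h : i.val ∈ S then
      ⟨0, ⟨min ((∑ j ∈ S.filter (fun j => j < i.val), (2*j+1)) + i.val) (l 0 - 1),
        lt_of_le_of_lt (min_le_right _ _) (by omega)⟩⟩
    else
      ⟨1, ⟨min ((∑ j ∈ (Finset.range m \ S).filter (fun j => j < i.val), (2*j+1)) + i.val)
          (l 1 - 1),
        lt_of_le_of_lt (min_le_right _ _) (by omega)⟩⟩, ?_⟩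
  rintro ⟨p, x⟩
  revert x
  fin_cases p <;> intro x
  · obtain ⟨n, hnS, hdist⟩ := cover (l 0) hl0 S hcov0 x.val x.isLt
    have hnm : n < m := Finset.mem_range.mp (hSsub hnS)
    refine ⟨⟨n, hnm⟩, ?_⟩
    beta_reduce
    rw [dif_pos (show (⟨n, hnm⟩ : Fin m).val ∈ S from hnS)]
    exact le_trans (pf_edist_le l 0 _ x) (by exact_mod_cast hdist)
  · obtain ⟨n, hnS, hdist⟩ := cover (l 1) hl1 (Finset.range m \ S) hcov1 x.val x.isLt
    have hnm : n < m := Finset.mem_range.mp (Finset.mem_sdiff.mp hnS).1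
    have hnotS : n ∉ S := (Finset.mem_sdiff.mp hnS).2
    refine ⟨⟨n, hnm⟩, ?_⟩
    beta_reduce
    rw [dif_neg (show ¬ (⟨n, hnm⟩ : Fin m).val ∈ S from hnotS)]
    exact le_trans (pf_edist_le l 1 _ x) (by exact_mod_cast hdist)
end

section
/- For all m ≥ n ≥ 2, the path forest consisting of one path of order m² - n² + 2 and n - 1 paths of order 2 (of total order m² - (n-1)² + 1) is not m-burnable. -/
section Aux

lemma pathForest_walk {n : ℕ} {l : Fin n → ℕ} {x y : Σ i : Fin n, Fin (l i)}
    (w : (pathForest l).Walk x y) :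
    x.1 = y.1 ∧ Nat.dist x.2.val y.2.val ≤ w.length := by
  induction w with
  | nil => simp [Nat.dist_self]
  | @cons u v w' h p ih =>
    obtain ⟨h1, h2⟩ := id h
    refine ⟨h1.trans ih.1, ?_⟩
    have ht := Nat.dist.triangle_inequality u.2.val v.2.val w'.2.val
    have hih := ih.2
    simp only [SimpleGraph.Walk.length_cons]
    omega

lemma pathForest_edist_le {n : ℕ} {l : Fin n → ℕ} {x y : Σ i : Fin n, Fin (l i)} {r : ℕ}
    (h : (pathForest l).edist x y ≤ (r : ℕ∞)) :
    x.1 = y.1 ∧ Nat.dist x.2.val y.2.val ≤ r := by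
  have hne : (pathForest l).edist x y ≠ ⊤ := by
    intro ht; rw [ht, top_le_iff] at h; exact (ENat.coe_ne_top r) h
  obtain ⟨p, hp⟩ := SimpleGraph.exists_walk_of_edist_ne_top hne
  have hw := pathForest_walk p
  have hlen : (p.length : ℕ∞) ≤ (r : ℕ∞) := by rw [hp]; exact h
  exact ⟨hw.1, hw.2.trans (by exact_mod_cast hlen)⟩

lemma sum_odd_range (k : ℕ) : ∑ i ∈ Finset.range k, (2 * i + 1) = k ^ 2 := by
  induction k with
  | zero => simp
  | succ k ih => rw [Finset.sum_range_succ, ih]; ring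

lemma sum_odd3_range (k : ℕ) : ∑ i ∈ Finset.range k, (2 * i + 3) = k ^ 2 + 2 * k := by
  induction k with
  | zero => simp
  | succ k ih => rw [Finset.sum_range_succ, ih]; ring

lemma sum_range_card_le_sum (f : ℕ → ℕ) (hf : Monotone f) (T : Finset ℕ) :
    ∑ i ∈ Finset.range T.card, f i ≤ ∑ t ∈ T, f t := by
  induction T using Finset.strongInduction with
  | _ T ih =>
    rcases T.eq_empty_or_nonempty with rfl | hT
    · simp
    · have hM := T.max'_mem hT
      set M := T.max' hT with hMdef
      have hcard : (T.erase M).card = T.card - 1 := Finset.card_erase_of_mem hM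
      have h1 : 1 ≤ T.card := Finset.card_pos.mpr hT
      have hMax : T.card - 1 ≤ M := by
        by_contra h
        push_neg at h
        have hsub : T ⊆ Finset.range (M + 1) :=
          fun t ht => Finset.mem_range.mpr (Nat.lt_succ_of_le (T.le_max' t ht))
        have := Finset.card_le_card hsub
        simp [Finset.card_range] at this
        omega
      have ihe := ih (T.erase M) (Finset.erase_ssubset hM)
      calc ∑ i ∈ Finset.range T.card, f i
          = ∑ i ∈ Finset.range (T.card - 1), f i + f (T.card - 1) := by
            conv_lhs => rw [show T.card = (T.card - 1) + 1 by omega]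
            rw [Finset.sum_range_succ]
        _ ≤ ∑ t ∈ T.erase M, f t + f M := by
            refine Nat.add_le_add ?_ (hf hMax)
            rw [hcard] at ihe; exact ihe
        _ = ∑ t ∈ T, f t := Finset.sum_erase_add _ _ hM

lemma ball_card_le (N c r : ℕ) :
    (Finset.univ.filter (fun a : Fin N => Nat.dist c a.val ≤ r)).card ≤ 2 * r + 1 := by
  have hmaps : ∀ a ∈ Finset.univ.filter (fun a : Fin N => Nat.dist c a.val ≤ r),
      a.val ∈ Finset.Icc (c - r) (c + r) := by
    intro a ha
    rw [Finset.mem_filter] at ha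
    have := ha.2
    simp only [Nat.dist] at this
    simp only [Finset.mem_Icc]
    omega
  have hinj := Finset.card_le_card_of_injOn _ hmaps (Fin.val_injective.injOn)
  have hIcc : (Finset.Icc (c - r) (c + r)).card ≤ 2 * r + 1 := by
    rw [Nat.card_Icc]; omega
  omega

end Aux

/-- For `m ≥ n ≥ 2`, the path forest with one path of order `m² - n² + 2` and
`n - 1` paths of order `2` is not `m`-burnable. -/
theorem stmt13 (m n : ℕ) (hn : 2 ≤ n) (hm : n ≤ m) :
    ¬ IsBurnable (pathForest (fun i : Fin n => if i.val = 0 then m ^ 2 - n ^ 2 + 2 else 2)) m := by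
  set N := m ^ 2 - n ^ 2 + 2 with hN
  set l : Fin n → ℕ := fun i : Fin n => if i.val = 0 then N else 2 with hl
  rintro ⟨f, hf⟩
  have hn0 : 0 < n := by omega
  have hm0 : 0 < m := by omega
  set z : Fin n := ⟨0, hn0⟩ with hz
  have hlz : l z = N := by simp [hl, hz]
  set S : Finset (Fin m) := Finset.univ.filter (fun i => (f i).1 = z) with hS
  have hcov : ∀ a : Fin (l z), ∃ i ∈ S, Nat.dist (f i).2.val a.val ≤ i.val := by
    intro a
    obtain ⟨i, hi⟩ := hf ⟨z, a⟩
    obtain ⟨h1, h2⟩ := pathForest_edist_le hi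
    exact ⟨i, Finset.mem_filter.mpr ⟨Finset.mem_univ _, h1⟩, h2⟩
  have hcount : N ≤ ∑ i ∈ S, (2 * i.val + 1) := by
    have hsub : (Finset.univ : Finset (Fin (l z))) ⊆
        S.biUnion (fun i => Finset.univ.filter
          (fun a : Fin (l z) => Nat.dist (f i).2.val a.val ≤ i.val)) := by
      intro a _
      obtain ⟨i, hiS, hia⟩ := hcov a
      exact Finset.mem_biUnion.mpr ⟨i, hiS, Finset.mem_filter.mpr ⟨Finset.mem_univ _, hia⟩⟩
    calc N = (Finset.univ : Finset (Fin (l z))).card := by simp [hlz]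
      _ ≤ _ := Finset.card_le_card hsub
      _ ≤ ∑ i ∈ S, (Finset.univ.filter
            (fun a : Fin (l z) => Nat.dist (f i).2.val a.val ≤ i.val)).card :=
          Finset.card_biUnion_le
      _ ≤ ∑ i ∈ S, (2 * i.val + 1) := Finset.sum_le_sum (fun i _ => ball_card_le _ _ _)
  have hsmall : ∀ j : Fin n, j.val ≠ 0 → ∃ i : Fin m, (f i).1 = j ∧ 1 ≤ i.val := by
    intro j hj
    have h2 : l j = 2 := by simp [hl, hj]
    have h0 : 0 < l j := by omega
    have h1 : 1 < l j := by omega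
    obtain ⟨i0, hi0⟩ := hf ⟨j, ⟨0, h0⟩⟩
    obtain ⟨hc0, hd0⟩ := pathForest_edist_le hi0
    by_cases hv : 1 ≤ i0.val
    · exact ⟨i0, hc0, hv⟩
    · have hi00 : i0.val = 0 := by omega
      have he0 : (pathForest l).edist (f i0) ⟨j, ⟨0, h0⟩⟩ = 0 := by
        refine le_antisymm ?_ zero_le
        simpa [hi00] using hi0
      have heq0 : f i0 = ⟨j, ⟨0, h0⟩⟩ := SimpleGraph.edist_eq_zero_iff.mp he0
      obtain ⟨i1, hi1⟩ := hf ⟨j, ⟨1, h1⟩⟩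
      obtain ⟨hc1, hd1⟩ := pathForest_edist_le hi1
      refine ⟨i1, hc1, ?_⟩
      by_contra hv1
      have hi10 : i1.val = 0 := by omega
      have he1 : (pathForest l).edist (f i1) ⟨j, ⟨1, h1⟩⟩ = 0 := by
        refine le_antisymm ?_ zero_le
        simpa [hi10] using hi1
      have heq1 : f i1 = ⟨j, ⟨1, h1⟩⟩ := SimpleGraph.edist_eq_zero_iff.mp he1
      have hii : i0 = i1 := Fin.ext (by omega)
      rw [hii, heq1] at heq0
      have hcontra := congrArg (fun x : Σ i : Fin n, Fin (l i) => x.2.val) heq0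
      simp at hcontra
  have hsmall' : ∀ j : Fin n, ∃ i : Fin m, j.val ≠ 0 → ((f i).1 = j ∧ 1 ≤ i.val) := by
    intro j
    by_cases hj : j.val = 0
    · exact ⟨⟨0, hm0⟩, fun h => absurd hj h⟩
    · obtain ⟨i, hi⟩ := hsmall j hj
      exact ⟨i, fun _ => hi⟩
  choose g hg using hsmall'
  set J : Finset (Fin n) := Finset.univ.filter (fun j => j.val ≠ 0) with hJ
  set T : Finset (Fin m) := J.image g with hT
  have hJcard : J.card = n - 1 := by
    have hJe : J = Finset.univ.erase z := by
      ext j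
      simp [hJ, hz, Fin.ext_iff]
    rw [hJe, Finset.card_erase_of_mem (Finset.mem_univ _)]
    simp
  have hTcard : T.card = n - 1 := by
    rw [hT, Finset.card_image_of_injOn, hJcard]
    intro j hj j' hj' hgg
    have h1 := (hg j (by simpa [hJ] using hj)).1
    have h2 := (hg j' (by simpa [hJ] using hj')).1
    rw [hgg] at h1
    exact h1.symm.trans h2
  have hTmem : ∀ t ∈ T, 1 ≤ t.val ∧ (f t).1 ≠ z := by
    intro t ht
    obtain ⟨j, hj, rfl⟩ := Finset.mem_image.mp ht
    have hj' : j.val ≠ 0 := by simpa [hJ] using hj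
    obtain ⟨h1, h2⟩ := hg j hj'
    refine ⟨h2, ?_⟩
    rw [h1]
    intro hc
    exact hj' (by rw [hc])
  have hST : S ⊆ Finset.univ \ T := by
    intro i hiS
    rw [Finset.mem_sdiff]
    refine ⟨Finset.mem_univ _, fun hiT => ?_⟩
    exact (hTmem i hiT).2 (by simpa [hS] using hiS)
  have htot : ∑ i ∈ (Finset.univ : Finset (Fin m)), (2 * i.val + 1) = m ^ 2 := by
    rw [Fin.sum_univ_eq_sum_range (fun k => 2 * k + 1)]
    exact sum_odd_range m
  have hsdiff : ∑ i ∈ Finset.univ \ T, (2 * i.val + 1) + ∑ i ∈ T, (2 * i.val + 1) = m ^ 2 := by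
    rw [Finset.sum_sdiff (Finset.subset_univ T), htot]
  have hSle : ∑ i ∈ S, (2 * i.val + 1) ≤ ∑ i ∈ Finset.univ \ T, (2 * i.val + 1) :=
    Finset.sum_le_sum_of_subset hST
  have hTsum : n ^ 2 - 1 ≤ ∑ t ∈ T, (2 * t.val + 1) := by
    set T' : Finset ℕ := T.image (fun t => t.val - 1) with hT'
    have hinj : Set.InjOn (fun t : Fin m => t.val - 1) T := by
      intro a ha b hb hab
      have h1 := (hTmem a ha).1
      have h2 := (hTmem b hb).1
      simp only at hab
      exact Fin.ext (by omega)
    have hT'card : T'.card = n - 1 := by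
      rw [hT', Finset.card_image_of_injOn hinj, hTcard]
    have heq : ∑ s ∈ T', (2 * s + 3) = ∑ t ∈ T, (2 * t.val + 1) := by
      rw [hT', Finset.sum_image hinj]
      refine Finset.sum_congr rfl (fun t ht => ?_)
      have := (hTmem t ht).1
      omega
    have hmono : Monotone (fun s => 2 * s + 3) := by
      intro a b hab; dsimp only; omega
    have hlow := sum_range_card_le_sum _ hmono T'
    rw [hT'card, sum_odd3_range] at hlow
    have hval : (n - 1) ^ 2 + 2 * (n - 1) = n ^ 2 - 1 := by
      obtain ⟨k, rfl⟩ : ∃ k, n = k + 1 := ⟨n - 1, by omega⟩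
      have hk : (k + 1) ^ 2 = k ^ 2 + 2 * k + 1 := by ring
      simp only [Nat.add_sub_cancel]
      omega
    omega
  have hnm : n ^ 2 ≤ m ^ 2 := Nat.pow_le_pow_left hm 2
  have hn2 : 1 ≤ n ^ 2 := Nat.one_le_two_pow.trans (by
    calc (2:ℕ) ^ 2 ≤ n ^ 2 := Nat.pow_le_pow_left hn 2) |>.trans (le_refl _)
  omega
end
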